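/- arXiv:2203.08660 — 4 statements merged into one kernel-verified Lean document; each statement's English description precedes it below -/
import Mathlib

section
/- Let f : [R₀, ∞) → ℝ be a nonnegative C¹ function satisfying f(R) ≤ C·R for all R ≥ R₀ and the differential inequality f(R) ≤ (R/β)·f'(R) + F(R) for all R ≥ R₀, where β > 1 and F : [R₀, ∞) → ℝ satisfies F(R)/log R → 0 as R → ∞. Then f(R)/log R → 0 as R → ∞. -/
open Real Filter Set

theorem stmt4 (R₀ C β : ℝ) (hR₀ : 1 < R₀) (hC : 0 < C) (hβ : 1 < β)
    (f F : ℝ → ℝ)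
    (hf0 : ∀ R ≥ R₀, 0 ≤ f R)
    (hfd : ∀ R ≥ R₀, DifferentiableAt ℝ f R)
    (hfd' : ContinuousOn (deriv f) (Ici R₀))
    (hlin : ∀ R ≥ R₀, f R ≤ C * R)
    (hineq : ∀ R ≥ R₀, f R ≤ (R / β) * deriv f R + F R)
    (hF : Tendsto (fun R => F R / Real.log R) atTop (nhds 0)) :
    Tendsto (fun R => f R / Real.log R) atTop (nhds 0) := by
  have hβ0 : (0:ℝ) < β := lt_trans one_pos hβ
  have key : ∀ ε' : ℝ, 0 < ε' → ∃ N, R₀ ≤ N ∧ Real.exp 1 ≤ N ∧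
      ∀ R ≥ N, f R ≤ ε' * (Real.log R + 1) := by
    intro ε' hε'
    obtain ⟨N₁, hN₁⟩ := (Metric.tendsto_atTop.mp hF) ε' hε'
    set R₁ : ℝ := max R₀ (max N₁ (Real.exp 1)) with hR₁def
    have hR₁R₀ : R₀ ≤ R₁ := le_max_left _ _
    have hR₁e : Real.exp 1 ≤ R₁ := le_trans (le_max_right _ _) (le_max_right _ _)
    refine ⟨R₁, hR₁R₀, hR₁e, ?_⟩
    have hpt : ∀ R ≥ R₁, 1 ≤ Real.log R ∧ 0 < R ∧ F R ≤ ε' * Real.log R := by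
      intro R hR
      have hRe : Real.exp 1 ≤ R := le_trans hR₁e hR
      have hR0 : (0:ℝ) < R := lt_of_lt_of_le (Real.exp_pos 1) hRe
      have hlog : 1 ≤ Real.log R := by
        calc (1:ℝ) = Real.log (Real.exp 1) := (Real.log_exp 1).symm
        _ ≤ Real.log R := Real.log_le_log (Real.exp_pos 1) hRe
      have hlogpos : 0 < Real.log R := lt_of_lt_of_le one_pos hlog
      have hdist := hN₁ R (le_trans (le_trans (le_max_left _ _) (le_max_right R₀ _)) hR)
      rw [Real.dist_eq, sub_zero] at hdist
      have hFR : F R / Real.log R < ε' := lt_of_abs_lt hdist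
      exact ⟨hlog, hR0, le_of_lt ((div_lt_iff₀ hlogpos).mp hFR)⟩
    set u : ℝ → ℝ := fun R => f R - ε' * Real.log R - ε' / β with hu
    set φ : ℝ → ℝ := fun R => u R * R ^ (-β) with hφ
    have hderiv : ∀ R ≥ R₁, HasDerivAt φ
        ((deriv f R - ε' * R⁻¹) * R ^ (-β) + u R * ((-β) * R ^ (-β - 1))) R := by
      intro R hR
      have hR0 : (0:ℝ) < R := (hpt R hR).2.1
      have hdu : HasDerivAt u (deriv f R - ε' * R⁻¹) R := by
        have h1 : HasDerivAt f (deriv f R) R := (hfd R (le_trans hR₁R₀ hR)).hasDerivAt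
        have h2 : HasDerivAt Real.log R⁻¹ R := Real.hasDerivAt_log (ne_of_gt hR0)
        exact ((h1.sub (h2.const_mul ε')).sub_const (ε' / β))
      have h3 : HasDerivAt (fun x : ℝ => x ^ (-β)) ((-β) * R ^ (-β - 1)) R :=
        Real.hasDerivAt_rpow_const (Or.inl (ne_of_gt hR0))
      exact hdu.mul h3
    have hmono : MonotoneOn φ (Ici R₁) := by
      apply monotoneOn_of_deriv_nonneg (convex_Ici R₁)
      · intro R hR
        exact ((hderiv R hR).differentiableAt).continuousAt.continuousWithinAt
      · rw [interior_Ici]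
        intro R hR
        exact ((hderiv R (le_of_lt hR)).differentiableAt).differentiableWithinAt
      · rw [interior_Ici]
        intro R hR
        have hR' : R₁ ≤ R := le_of_lt hR
        obtain ⟨hlog, hR0, hFle⟩ := hpt R hR'
        rw [(hderiv R hR').deriv]
        have hpow : (0:ℝ) < R ^ (-β - 1) := Real.rpow_pos_of_pos hR0 _
        have hsplit : R ^ (-β) = R * R ^ (-β - 1) := by
          calc R ^ (-β) = R ^ ((1:ℝ) + (-β - 1)) := by rw [show (1:ℝ) + (-β - 1) = -β by ring]
          _ = R ^ (1:ℝ) * R ^ (-β - 1) := Real.rpow_add hR0 1 (-β - 1)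
          _ = R * R ^ (-β - 1) := by rw [Real.rpow_one]
        have h1 : β * f R ≤ R * deriv f R + β * F R := by
          have hm := mul_le_mul_of_nonneg_left (hineq R (le_trans hR₁R₀ hR')) hβ0.le
          calc β * f R ≤ β * ((R / β) * deriv f R + F R) := hm
          _ = R * deriv f R + β * F R := by field_simp
        have h2 : β * F R ≤ β * (ε' * Real.log R) :=
          mul_le_mul_of_nonneg_left hFle hβ0.le
        have hinner : 0 ≤ (deriv f R - ε' * R⁻¹) * R - β * u R := by
          have heq : (deriv f R - ε' * R⁻¹) * R - β * u R
              = R * deriv f R - β * f R + β * (ε' * Real.log R) := by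
            rw [hu]
            field_simp
            ring
          rw [heq]
          linarith
        have hcalc : (deriv f R - ε' * R⁻¹) * R ^ (-β) + u R * ((-β) * R ^ (-β - 1))
            = ((deriv f R - ε' * R⁻¹) * R - β * u R) * R ^ (-β - 1) := by
          rw [hsplit]; ring
        rw [hcalc]
        exact mul_nonneg hinner hpow.le
    intro R hR
    obtain ⟨hlog, hR0, _⟩ := hpt R hR
    have hbound : ∀ S ≥ R, φ R ≤ C * S ^ (1 - β) := by
      intro S hS
      have hSR₁ : R₁ ≤ S := le_trans hR hS
      obtain ⟨hlogS, hS0, _⟩ := hpt S hSR₁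
      have hm : φ R ≤ φ S := hmono (mem_Ici.mpr hR) (mem_Ici.mpr hSR₁) hS
      have hpowS : (0:ℝ) < S ^ (-β) := Real.rpow_pos_of_pos hS0 _
      have huS : u S ≤ f S := by
        have : 0 ≤ ε' * Real.log S := mul_nonneg hε'.le (by linarith)
        have : 0 ≤ ε' / β := div_nonneg hε'.le hβ0.le
        rw [hu]; dsimp only; linarith [mul_nonneg hε'.le (show (0:ℝ) ≤ Real.log S by linarith)]
      have hfS : f S ≤ C * S := hlin S (le_trans hR₁R₀ hSR₁)
      have hsplitS : S ^ (1 - β) = S * S ^ (-β) := by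
        calc S ^ (1 - β) = S ^ ((1:ℝ) + (-β)) := by rw [show (1:ℝ) + (-β) = 1 - β by ring]
        _ = S ^ (1:ℝ) * S ^ (-β) := Real.rpow_add hS0 1 (-β)
        _ = S * S ^ (-β) := by rw [Real.rpow_one]
      calc φ R ≤ φ S := hm
      _ = u S * S ^ (-β) := rfl
      _ ≤ f S * S ^ (-β) := mul_le_mul_of_nonneg_right huS hpowS.le
      _ ≤ (C * S) * S ^ (-β) := mul_le_mul_of_nonneg_right hfS hpowS.le
      _ = C * S ^ (1 - β) := by rw [hsplitS]; ring
    have htend : Tendsto (fun S : ℝ => C * S ^ (1 - β)) atTop (nhds 0) := by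
      have h0 : Tendsto (fun S : ℝ => S ^ (-(β - 1))) atTop (nhds 0) :=
        tendsto_rpow_neg_atTop (by linarith)
      have h1 : Tendsto (fun S : ℝ => C * S ^ (-(β - 1))) atTop (nhds (C * 0)) :=
        h0.const_mul C
      rw [mul_zero] at h1
      convert h1 using 2
      ring_nf
    have hφR : φ R ≤ 0 :=
      ge_of_tendsto htend (eventually_atTop.mpr ⟨R, hbound⟩)
    have hpowR : (0:ℝ) < R ^ (-β) := Real.rpow_pos_of_pos hR0 _
    have huR : u R ≤ 0 := by
      by_contra h
      push_neg at h
      have : 0 < u R * R ^ (-β) := mul_pos h hpowR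
      have hφeq : φ R = u R * R ^ (-β) := rfl
      linarith [hφeq ▸ hφR]
    have hεβ : ε' / β ≤ ε' := div_le_self hε'.le (le_of_lt hβ)
    rw [hu] at huR
    dsimp only at huR
    nlinarith
  rw [Metric.tendsto_atTop]
  intro ε hε
  obtain ⟨N, hNR₀, hNe, hN⟩ := key (ε / 4) (by linarith)
  refine ⟨N, fun R hR => ?_⟩
  have hRe : Real.exp 1 ≤ R := le_trans hNe hR
  have hR0 : (0:ℝ) < R := lt_of_lt_of_le (Real.exp_pos 1) hRe
  have hlog : 1 ≤ Real.log R := by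
    calc (1:ℝ) = Real.log (Real.exp 1) := (Real.log_exp 1).symm
    _ ≤ Real.log R := Real.log_le_log (Real.exp_pos 1) hRe
  have hlogpos : 0 < Real.log R := lt_of_lt_of_le one_pos hlog
  have hfR : f R ≤ ε / 4 * (Real.log R + 1) := hN R hR
  have hf0R : 0 ≤ f R := hf0 R (le_trans hNR₀ hR)
  rw [Real.dist_eq, sub_zero, abs_of_nonneg (div_nonneg hf0R hlogpos.le)]
  rw [div_lt_iff₀ hlogpos]
  nlinarith
end

section
/- Let g : [R₁, ∞) → ℝ be continuous, ψ-measurable functions such that for every μ > 0 there exists R(μ) with α(R)(g(R) - μ) ≤ g'(R) for all R > R(μ), where α(R) ≥ β̃/R for some β̃ > 1 and R large, and g(R) ≤ C·R/log R for all R. Then g(R) → 0 as R → ∞, provided g ≥ 0. -/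
open Real Filter Set

theorem stmt6 (R₁ β' C : ℝ) (hR₁ : 1 < R₁) (hβ : 1 < β') (hC : 0 < C)
    (g α : ℝ → ℝ)
    (hg0 : ∀ R ≥ R₁, 0 ≤ g R)
    (hgd : ∀ R ≥ R₁, DifferentiableAt ℝ g R)
    (hgc : ContinuousOn (deriv g) (Ici R₁))
    (hαc : ContinuousOn α (Ici R₁))
    (hα : ∃ R₂ ≥ R₁, ∀ R ≥ R₂, β' / R ≤ α R)
    (hgb : ∀ R ≥ R₁, g R ≤ C * R / Real.log R)
    (hμ : ∀ μ > 0, ∃ Rμ ≥ R₁, ∀ R > Rμ, α R * (g R - μ) ≤ deriv g R) :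
    Tendsto g atTop (nhds 0) := by
  obtain ⟨R₂, hR₂₁, hR₂⟩ := hα
  have key : ∀ μ > 0, ∃ R₀, R₁ ≤ R₀ ∧ ∀ R > R₀, g R ≤ μ := by
    intro μ hμ'
    obtain ⟨Rμ, hRμ₁, hRμ⟩ := hμ μ hμ'
    refine ⟨max Rμ R₂, le_max_of_le_left hRμ₁, ?_⟩
    intro S hS
    by_contra hgS
    push_neg at hgS
    have hRμS : Rμ < S := lt_of_le_of_lt (le_max_left _ _) hS
    have hR₂S : R₂ < S := lt_of_le_of_lt (le_max_right _ _) hS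
    have hR₁S : R₁ ≤ S := le_trans hRμ₁ hRμS.le
    have hS1 : 1 < S := lt_of_lt_of_le hR₁ hR₁S
    have hS0 : 0 < S := by linarith
    set G : ℝ → ℝ := fun x => (g x - μ) * x ^ (-β') with hGdef
    have hG : ∀ x, R₁ ≤ x →
        HasDerivAt G (deriv g x * x ^ (-β') + (g x - μ) * (-β' * x ^ (-β' - 1))) x := by
      intro x hx
      have hx0 : x ≠ 0 := by nlinarith
      exact ((hgd x hx).hasDerivAt.sub_const μ).mul
        (Real.hasDerivAt_rpow_const (Or.inl hx0))
    have hGd : ∀ x, S < x → μ < g x →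
        0 ≤ deriv g x * x ^ (-β') + (g x - μ) * (-β' * x ^ (-β' - 1)) := by
      intro x hx hgx
      have hx0 : (0:ℝ) < x := by linarith
      have hxne : x ≠ 0 := hx0.ne'
      have hαx : β' / x ≤ α x := hR₂ x (by linarith)
      have hdx : α x * (g x - μ) ≤ deriv g x := hRμ x (by linarith)
      have h5 : β' / x * (g x - μ) ≤ deriv g x :=
        le_trans (mul_le_mul_of_nonneg_right hαx (by linarith)) hdx
      have h5' : β' * (g x - μ) ≤ deriv g x * x := by
        have h := mul_le_mul_of_nonneg_right h5 hx0.le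
        calc β' * (g x - μ) = β' / x * (g x - μ) * x := by field_simp
          _ ≤ deriv g x * x := h
      have hsplit : x ^ (-β' - 1) = x ^ (-β') / x := by
        rw [Real.rpow_sub hx0, Real.rpow_one]
      have key2 : deriv g x * x ^ (-β') + (g x - μ) * (-β' * x ^ (-β' - 1))
          = (deriv g x * x - β' * (g x - μ)) * (x ^ (-β') / x) := by
        rw [hsplit]; field_simp; ring
      rw [key2]
      exact mul_nonneg (by linarith)
        (div_nonneg (Real.rpow_pos_of_pos hx0 _).le hx0.le)
    have mono : ∀ b, S ≤ b → (∀ x ∈ Ioo S b, μ < g x) → G S ≤ G b := by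
      intro b hb hpos
      have hmono : MonotoneOn G (Icc S b) := by
        apply monotoneOn_of_deriv_nonneg (convex_Icc S b)
        · intro x hx
          exact (hG x (le_trans hR₁S hx.1)).continuousAt.continuousWithinAt
        · intro x hx
          rw [interior_Icc] at hx
          exact (hG x (by linarith [hx.1])).differentiableAt.differentiableWithinAt
        · intro x hx
          rw [interior_Icc] at hx
          rw [(hG x (by linarith [hx.1])).deriv]
          exact hGd x hx.1 (hpos x hx)
      exact hmono (left_mem_Icc.mpr hb) (right_mem_Icc.mpr hb) hb
    have pos : ∀ T, S ≤ T → ∀ x ∈ Icc S T, μ < g x := by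
      intro T hT
      by_contra hcon
      push_neg at hcon
      obtain ⟨x₀, hx₀, hgx₀⟩ := hcon
      have hgcont : ContinuousOn g (Icc S T) := fun x hx =>
        ((hgd x (le_trans hR₁S hx.1)).continuousAt).continuousWithinAt
      have hKc : IsClosed (Icc S T ∩ g ⁻¹' Iic μ) :=
        hgcont.preimage_isClosed_of_isClosed isClosed_Icc isClosed_Iic
      have hKne : (Icc S T ∩ g ⁻¹' Iic μ).Nonempty := ⟨x₀, hx₀, hgx₀⟩
      have hbdd : BddBelow (Icc S T ∩ g ⁻¹' Iic μ) := ⟨S, fun x hx => hx.1.1⟩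
      set T' := sInf (Icc S T ∩ g ⁻¹' Iic μ) with hT'def
      have hT'mem : T' ∈ Icc S T ∩ g ⁻¹' Iic μ := hKc.csInf_mem hKne hbdd
      have hgT' : g T' ≤ μ := hT'mem.2
      have hST' : S < T' := by
        rcases eq_or_lt_of_le hT'mem.1.1 with h | h
        · exfalso; rw [← h] at hgT'; linarith
        · exact h
      have hpos' : ∀ x ∈ Ioo S T', μ < g x := by
        intro x hx
        by_contra h
        push_neg at h
        have hxK : x ∈ Icc S T ∩ g ⁻¹' Iic μ :=
          ⟨⟨hx.1.le, le_trans hx.2.le hT'mem.1.2⟩, h⟩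
        exact absurd (csInf_le hbdd hxK) (not_le.mpr hx.2)
      have h1 := mono T' hST'.le hpos'
      have hGS : 0 < G S := mul_pos (by linarith) (Real.rpow_pos_of_pos hS0 _)
      have hGT' : G T' ≤ 0 := mul_nonpos_of_nonpos_of_nonneg (by linarith)
        (Real.rpow_pos_of_pos (by linarith) _).le
      linarith
    have hc : 0 < (g S - μ) * S ^ (-β') :=
      mul_pos (by linarith) (Real.rpow_pos_of_pos hS0 _)
    set c := (g S - μ) * S ^ (-β') with hcdef
    have grow : ∀ T, S ≤ T → c * T ^ β' ≤ g T - μ := by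
      intro T hT
      have h1 := mono T hT (fun x hx => pos T hT x ⟨hx.1.le, hx.2.le⟩)
      have hT0 : 0 < T := by linarith
      have h2 : c * T ^ β' ≤ (g T - μ) * T ^ (-β') * T ^ β' :=
        mul_le_mul_of_nonneg_right h1 (Real.rpow_pos_of_pos hT0 _).le
      calc c * T ^ β' ≤ (g T - μ) * T ^ (-β') * T ^ β' := h2
        _ = g T - μ := by
            rw [mul_assoc, ← Real.rpow_add hT0]
            simp
    have htend : Tendsto (fun T : ℝ => c * T ^ (β' - 1)) atTop atTop :=
      Tendsto.const_mul_atTop hc (tendsto_rpow_atTop (by linarith))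
    obtain ⟨T, hTa, hTb⟩ :=
      ((eventually_ge_atTop (max S 3)).and (htend.eventually_gt_atTop C)).exists
    have hTS : S ≤ T := le_trans (le_max_left _ _) hTa
    have hT3 : (3:ℝ) ≤ T := le_trans (le_max_right _ _) hTa
    have hT0 : (0:ℝ) < T := by linarith
    have hg1 := grow T hTS
    have hg2 := hgb T (le_trans hR₁S hTS)
    have hlog : 1 ≤ Real.log T := by
      rw [Real.le_log_iff_exp_le hT0]
      calc Real.exp 1 ≤ 3 := by
            have := Real.exp_one_lt_d9
            linarith
        _ ≤ T := hT3
    have hg3 : C * T / Real.log T ≤ C * T := by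
      rw [div_le_iff₀ (by linarith : (0:ℝ) < Real.log T)]
      nlinarith [mul_pos hC hT0]
    have hsplit : T ^ β' = T ^ (β' - 1) * T := by
      rw [← Real.rpow_add_one hT0.ne' (β' - 1)]
      norm_num
    have hg1' : c * (T ^ (β' - 1) * T) ≤ g T - μ := by rwa [hsplit] at hg1
    have hmul := mul_lt_mul_of_pos_right hTb hT0
    nlinarith [hg1', hmul, hg2, hg3]
  rw [NormedAddCommGroup.tendsto_nhds_zero]
  intro ε hε
  obtain ⟨R₀, hR₀₁, hR₀⟩ := key (ε / 2) (by linarith)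
  filter_upwards [eventually_gt_atTop R₀] with x hx
  have hx1 : R₁ ≤ x := le_trans hR₀₁ hx.le
  rw [Real.norm_eq_abs, abs_of_nonneg (hg0 x hx1)]
  linarith [hR₀ x hx]
end

section
/- Let u : ℝ² → ℝ² be a smooth solution of -Δu = u·j(1-|u|²) on the ball B_r, where j : ℝ → ℝ is continuous with antiderivative J (J' = j). Then the Pohozaev identity holds: ∫_{S_r} |∂u/∂ν|² dσ + (2/r)∫_{B_r} J(1-|u|²) dx = ∫_{S_r} |∂u/∂τ|² dσ + ∫_{S_r} J(1-|u|²) dσ, where ν and τ denote the outer normal and tangential directions on the circle S_r of radius r. -/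
open Real MeasureTheory Filter Set

noncomputable section

abbrev E2 := EuclideanSpace ℝ (Fin 2)

def bvec (i : Fin 2) : E2 := EuclideanSpace.single i 1

def pd (i : Fin 2) (f : E2 → ℝ) (x : E2) : ℝ := fderiv ℝ f x (bvec i)

def lap (f : E2 → ℝ) (x : E2) : ℝ := ∑ i, pd i (fun y => pd i f y) x

def gradsq (u : E2 → E2) (x : E2) : ℝ := ∑ i, ∑ k, (pd i (fun y => u y k) x)^2

def cpt (R θ : ℝ) : E2 := WithLp.toLp 2 ![R * Real.cos θ, R * Real.sin θ]

def tv (θ : ℝ) : E2 := WithLp.toLp 2 ![-Real.sin θ, Real.cos θ]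

def pdv (i : Fin 2) (u : E2 → E2) (x : E2) : E2 := WithLp.toLp 2 (fun k => pd i (fun z => u z k) x)

def wedge (a b : E2) : ℝ := a 0 * b 1 - a 1 * b 0


lemma decomp (v : E2) : v = v 0 • bvec 0 + v 1 • bvec 1 := by
  ext l
  fin_cases l <;> simp [bvec, EuclideanSpace.single_apply]

lemma clm_apply_eq {F : Type*} [NormedAddCommGroup F] [NormedSpace ℝ F]
    (L : E2 →L[ℝ] F) (v : E2) : L v = v 0 • L (bvec 0) + v 1 • L (bvec 1) := by
  conv_lhs => rw [decomp v]
  simp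

lemma pd_apply_eq {f : E2 → ℝ} {x : E2} (hf : DifferentiableAt ℝ f x) (v : E2) :
    fderiv ℝ f x v = v 0 * pd 0 f x + v 1 * pd 1 f x := by
  rw [clm_apply_eq]; rfl

lemma pd_add {f g : E2 → ℝ} {x : E2} (hf : DifferentiableAt ℝ f x)
    (hg : DifferentiableAt ℝ g x) (i : Fin 2) :
    pd i (fun y => f y + g y) x = pd i f x + pd i g x := by
  unfold pd; rw [fderiv_fun_add hf hg]; rfl

lemma pd_sub {f g : E2 → ℝ} {x : E2} (hf : DifferentiableAt ℝ f x)
    (hg : DifferentiableAt ℝ g x) (i : Fin 2) :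
    pd i (fun y => f y - g y) x = pd i f x - pd i g x := by
  unfold pd; rw [fderiv_fun_sub hf hg]; rfl

lemma pd_mul {f g : E2 → ℝ} {x : E2} (hf : DifferentiableAt ℝ f x)
    (hg : DifferentiableAt ℝ g x) (i : Fin 2) :
    pd i (fun y => f y * g y) x = pd i f x * g x + f x * pd i g x := by
  unfold pd; rw [fderiv_fun_mul hf hg]; simp only [ContinuousLinearMap.add_apply,
    ContinuousLinearMap.smul_apply, smul_eq_mul]; ring

lemma pd_const (c : ℝ) (i : Fin 2) (x : E2) : pd i (fun _ => c) x = 0 := by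
  unfold pd; simp

lemma pd_const_mul {f : E2 → ℝ} {x : E2} (hf : DifferentiableAt ℝ f x) (c : ℝ) (i : Fin 2) :
    pd i (fun y => c * f y) x = c * pd i f x := by
  unfold pd; rw [fderiv_const_mul hf]; simp

lemma pd_sum {ι : Type*} (s : Finset ι) {f : ι → E2 → ℝ} {x : E2}
    (hf : ∀ l ∈ s, DifferentiableAt ℝ (f l) x) (i : Fin 2) :
    pd i (fun y => ∑ l ∈ s, f l y) x = ∑ l ∈ s, pd i (f l) x := by
  unfold pd; rw [fderiv_fun_sum hf]; simp

lemma pd_pow {f : E2 → ℝ} {x : E2} (hf : DifferentiableAt ℝ f x) (i : Fin 2) :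
    pd i (fun y => (f y)^2) x = 2 * f x * pd i f x := by
  have := pd_mul hf hf i
  simp only [← sq] at this
  rw [this]; ring

lemma pd_comp {f : E2 → ℝ} {h : ℝ → ℝ} {h' : ℝ} {x : E2}
    (hh : HasDerivAt h h' (f x)) (hf : DifferentiableAt ℝ f x) (i : Fin 2) :
    pd i (fun y => h (f y)) x = h' * pd i f x := by
  unfold pd
  have : fderiv ℝ (fun y => h (f y)) x = h' • fderiv ℝ f x :=
    (hh.comp_hasFDerivAt x hf.hasFDerivAt).fderiv
  rw [this]; simp

lemma differentiable_coord (l : Fin 2) : Differentiable ℝ (fun y : E2 => y l) :=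
  (EuclideanSpace.proj l : E2 →L[ℝ] ℝ).differentiable

lemma pd_coord (l i : Fin 2) (x : E2) :
    pd i (fun y : E2 => y l) x = if l = i then 1 else 0 := by
  unfold pd
  have : fderiv ℝ (fun y : E2 => y l) x = (EuclideanSpace.proj l : E2 →L[ℝ] ℝ) :=
    (EuclideanSpace.proj l : E2 →L[ℝ] ℝ).fderiv
  rw [this]
  simp [bvec, EuclideanSpace.single_apply]

lemma comp_contDiff {u : E2 → E2} {n : ℕ∞} (hu : ContDiff ℝ n u) (k : Fin 2) :
    ContDiff ℝ n (fun y => u y k) :=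
  (EuclideanSpace.proj k : E2 →L[ℝ] ℝ).contDiff.comp hu

lemma pd_contDiff {f : E2 → ℝ} (hf : ContDiff ℝ 2 f) (i : Fin 2) :
    ContDiff ℝ 1 (fun x => pd i f x) :=
  (hf.fderiv_right (by norm_num)).clm_apply contDiff_const

lemma pd_continuous {f : E2 → ℝ} (hf : ContDiff ℝ 1 f) (i : Fin 2) :
    Continuous (fun x => pd i f x) :=
  (((hf.fderiv_right (m := 0) (by norm_num))).clm_apply contDiff_const).continuous

lemma pd_comm {f : E2 → ℝ} (hf : ContDiff ℝ 2 f) (i l : Fin 2) (x : E2) :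
    pd i (fun y => pd l f y) x = pd l (fun y => pd i f y) x := by
  have hdf : Differentiable ℝ f := hf.differentiable (by norm_num)
  have hdf' : DifferentiableAt ℝ (fderiv ℝ f) x :=
    ((hf.fderiv_right (m := 1) (by norm_num)).differentiable (by norm_num)).differentiableAt
  have key2 : ∀ m n : Fin 2, pd m (fun y => pd n f y) x
      = fderiv ℝ (fderiv ℝ f) x (bvec m) (bvec n) := by
    intro m n
    unfold pd
    have : fderiv ℝ (fun y => fderiv ℝ f y (bvec n)) x
        = (ContinuousLinearMap.apply ℝ ℝ (bvec n)).comp (fderiv ℝ (fderiv ℝ f) x) :=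
      ((ContinuousLinearMap.apply ℝ ℝ (bvec n)).hasFDerivAt.comp x hdf'.hasFDerivAt).fderiv
    rw [this]; rfl
  have sym := second_derivative_symmetric (f := f) (f' := fderiv ℝ f)
    (fun y => (hdf y).hasFDerivAt) hdf'.hasFDerivAt (bvec i) (bvec l)
  rw [key2, key2, sym]

lemma pd_proj_comp {u : E2 → E2} {x : E2} (hu : DifferentiableAt ℝ u x) (i k : Fin 2) :
    pd i (fun y => u y k) x = (fderiv ℝ u x (bvec i)) k := by
  unfold pd
  have : fderiv ℝ (fun y => u y k) x
      = (EuclideanSpace.proj k : E2 →L[ℝ] ℝ).comp (fderiv ℝ u x) :=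
    ((EuclideanSpace.proj k : E2 →L[ℝ] ℝ).hasFDerivAt.comp x hu.hasFDerivAt).fderiv
  rw [this]; rfl

lemma fderiv_vec_apply {u : E2 → E2} {x : E2} (hu : DifferentiableAt ℝ u x) (v : E2) (k : Fin 2) :
    (fderiv ℝ u x v) k = v 0 * pd 0 (fun y => u y k) x + v 1 * pd 1 (fun y => u y k) x := by
  rw [clm_apply_eq (fderiv ℝ u x) v, pd_proj_comp hu, pd_proj_comp hu]
  rfl

lemma normsq_eq (v : E2) : ‖v‖^2 = v 0 ^ 2 + v 1 ^ 2 := by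
  rw [EuclideanSpace.norm_eq, Real.sq_sqrt (by positivity)]
  simp [Fin.sum_univ_two, sq_abs]

def QQ (u : E2 → E2) (x : E2) : ℝ := ∑ k, (u x k)^2

def JJf (u : E2 → E2) (J : ℝ → ℝ) (x : E2) : ℝ := J (1 - QQ u x)

def gfun (u : E2 → E2) (J : ℝ → ℝ) (i : Fin 2) (x : E2) : ℝ :=
  (∑ k, (∑ l, x l * pd l (fun y => u y k) x) * pd i (fun y => u y k) x)
    - x i * ((1/2) * (gradsq u x + JJf u J x))

section Reg

variable {u : E2 → E2} {j J : ℝ → ℝ}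

lemma QQ_contDiff (hu : ContDiff ℝ 2 u) : ContDiff ℝ 2 (QQ u) := by
  unfold QQ
  exact ContDiff.sum fun k _ => (comp_contDiff hu k).pow 2

lemma J_contDiff (hj : Continuous j) (hJ : ∀ t, HasDerivAt J (j t) t) : ContDiff ℝ 1 J := by
  rw [contDiff_one_iff_deriv]
  refine ⟨fun t => (hJ t).differentiableAt, ?_⟩
  have : deriv J = j := funext fun t => (hJ t).deriv
  rw [this]; exact hj

lemma JJf_contDiff (hu : ContDiff ℝ 2 u) (hj : Continuous j)
    (hJ : ∀ t, HasDerivAt J (j t) t) : ContDiff ℝ 1 (JJf u J) := by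
  unfold JJf
  exact (J_contDiff hj hJ).comp (contDiff_const.sub ((QQ_contDiff hu).of_le (by norm_num)))

lemma gradsq_contDiff (hu : ContDiff ℝ 2 u) : ContDiff ℝ 1 (gradsq u) := by
  unfold gradsq
  exact ContDiff.sum fun i _ => ContDiff.sum fun k _ =>
    (pd_contDiff (comp_contDiff hu k) i).pow 2

lemma gfun_contDiff (hu : ContDiff ℝ 2 u) (hj : Continuous j)
    (hJ : ∀ t, HasDerivAt J (j t) t) (i : Fin 2) : ContDiff ℝ 1 (gfun u J i) := by
  unfold gfun
  refine ContDiff.sub ?_ ?_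
  · exact ContDiff.sum fun k _ => ContDiff.mul
      (ContDiff.sum fun l _ => ((EuclideanSpace.proj l : E2 →L[ℝ] ℝ).contDiff).mul
        (pd_contDiff (comp_contDiff hu k) l))
      (pd_contDiff (comp_contDiff hu k) i)
  · exact ((EuclideanSpace.proj i : E2 →L[ℝ] ℝ).contDiff).mul
      (contDiff_const.mul ((gradsq_contDiff hu).add (JJf_contDiff hu hj hJ)))

end Reg

section Core

variable {u : E2 → E2} {j J : ℝ → ℝ}

lemma pd_QQ (hu : ContDiff ℝ 2 u) (i : Fin 2) (x : E2) :
    pd i (QQ u) x = ∑ k, 2 * u x k * pd i (fun y => u y k) x := by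
  have duk : ∀ k : Fin 2, DifferentiableAt ℝ (fun y => u y k) x := fun k =>
    ((comp_contDiff hu k).differentiable (by norm_num)).differentiableAt
  have e1 := pd_sum (f := fun (k : Fin 2) (y : E2) => (u y k)^2) Finset.univ
    (fun k _ => ((duk k).pow 2)) i
  have : QQ u = fun y => ∑ k, (u y k)^2 := rfl
  rw [this, e1]
  exact Finset.sum_congr rfl fun k _ => pd_pow (duk k) i

lemma pd_JJf (hu : ContDiff ℝ 2 u) (hJ : ∀ t, HasDerivAt J (j t) t) (i : Fin 2) (x : E2) :
    pd i (JJf u J) x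
      = j (1 - QQ u x) * (0 - ∑ k, 2 * u x k * pd i (fun y => u y k) x) := by
  have dQQ : DifferentiableAt ℝ (QQ u) x :=
    ((QQ_contDiff hu).differentiable (by norm_num)).differentiableAt
  have dsub : DifferentiableAt ℝ (fun y => 1 - QQ u y) x :=
    (differentiableAt_const 1).sub dQQ
  have e1 := pd_comp (f := fun y => 1 - QQ u y) (h := J)
    (hJ (1 - QQ u x)) dsub i
  have e2 := pd_sub (f := fun _ : E2 => (1:ℝ)) (g := QQ u)
    (differentiableAt_const 1) dQQ i
  have : JJf u J = fun y => J ((fun y => 1 - QQ u y) y) := rfl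
  rw [this, e1, e2, pd_const, pd_QQ hu]

lemma pd_gradsq (hu : ContDiff ℝ 2 u) (i : Fin 2) (x : E2) :
    pd i (gradsq u) x
      = ∑ l, ∑ k, 2 * pd l (fun y => u y k) x
          * pd i (fun y => pd l (fun z => u z k) y) x := by
  have dD : ∀ l k : Fin 2, DifferentiableAt ℝ (fun y => pd l (fun z => u z k) y) x :=
    fun l k => ((pd_contDiff (comp_contDiff hu k) l).differentiable one_ne_zero).differentiableAt
  have : gradsq u = fun y => ∑ l, ∑ k, (pd l (fun z => u z k) y)^2 := rfl
  rw [this]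
  have e1 := pd_sum (f := fun (l : Fin 2) (y : E2) => ∑ k, (pd l (fun z => u z k) y)^2)
    Finset.univ (fun l _ => DifferentiableAt.fun_sum fun k _ => (dD l k).fun_pow 2) i
  rw [e1]
  refine Finset.sum_congr rfl fun l _ => ?_
  have e2 := pd_sum (f := fun (k : Fin 2) (y : E2) => (pd l (fun z => u z k) y)^2)
    Finset.univ (fun k _ => (dD l k).fun_pow 2) i
  rw [e2]
  exact Finset.sum_congr rfl fun k _ => pd_pow (dD l k) i

lemma pd_gfun (hu : ContDiff ℝ 2 u) (hj : Continuous j)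
    (hJ : ∀ t, HasDerivAt J (j t) t) (i : Fin 2) (x : E2) :
    pd i (gfun u J i) x
      = (∑ k, ((∑ l, ((if l = i then (1:ℝ) else 0) * pd l (fun y => u y k) x
              + x l * pd i (fun y => pd l (fun z => u z k) y) x))
            * pd i (fun y => u y k) x
          + (∑ l, x l * pd l (fun y => u y k) x) * pd i (fun y => pd i (fun z => u z k) y) x))
        - ((1:ℝ) * ((1/2) * (gradsq u x + JJf u J x))
           + x i * ((1/2) * ((∑ l, ∑ k, 2 * pd l (fun y => u y k) x
                * pd i (fun y => pd l (fun z => u z k) y) x)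
              + j (1 - QQ u x) * (0 - ∑ k, 2 * u x k * pd i (fun y => u y k) x)))) := by
  have duk : ∀ k : Fin 2, DifferentiableAt ℝ (fun y => u y k) x := fun k =>
    ((comp_contDiff hu k).differentiable (by norm_num)).differentiableAt
  have dD : ∀ l k : Fin 2, DifferentiableAt ℝ (fun y => pd l (fun z => u z k) y) x :=
    fun l k => ((pd_contDiff (comp_contDiff hu k) l).differentiable one_ne_zero).differentiableAt
  have dcoord : ∀ l : Fin 2, DifferentiableAt ℝ (fun y : E2 => y l) x :=
    fun l => (differentiable_coord l).differentiableAt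
  have dA : ∀ k : Fin 2, DifferentiableAt ℝ
      (fun y => ∑ l, y l * pd l (fun z => u z k) y) x :=
    fun k => DifferentiableAt.fun_sum fun l _ => (dcoord l).fun_mul (dD l k)
  have dgrad : DifferentiableAt ℝ (gradsq u) x :=
    ((gradsq_contDiff hu).differentiable one_ne_zero).differentiableAt
  have dJJ : DifferentiableAt ℝ (JJf u J) x :=
    ((JJf_contDiff hu hj hJ).differentiable one_ne_zero).differentiableAt
  have hgf : gfun u J i = fun y =>
      (fun y => ∑ k, (∑ l, y l * pd l (fun z => u z k) y) * pd i (fun z => u z k) y) y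
      - (fun y => y i * ((1/2) * (gradsq u y + JJf u J y))) y := rfl
  rw [hgf, pd_sub (DifferentiableAt.fun_sum fun k _ => (dA k).fun_mul (dD i k))
    ((dcoord i).fun_mul (((dgrad.fun_add dJJ)).const_mul _))]
  congr 1
  · rw [pd_sum Finset.univ (fun k _ => (dA k).fun_mul (dD i k))]
    refine Finset.sum_congr rfl fun k _ => ?_
    rw [pd_mul (dA k) (dD i k)]
    congr 2
    rw [pd_sum Finset.univ (fun l _ => (dcoord l).fun_mul (dD l k))]
    refine Finset.sum_congr rfl fun l _ => ?_
    rw [pd_mul (dcoord l) (dD l k), pd_coord]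
  · rw [pd_mul (dcoord i) (((dgrad.fun_add dJJ)).const_mul _), pd_coord, if_pos rfl]
    congr 2
    rw [pd_const_mul (dgrad.fun_add dJJ)]
    congr 1
    rw [pd_add dgrad dJJ, pd_gradsq hu, pd_JJf hu hJ]

end Core

section Div

variable {u : E2 → E2} {j J : ℝ → ℝ}

lemma div_gfun (hu : ContDiff ℝ 2 u) (hj : Continuous j)
    (hJ : ∀ t, HasDerivAt J (j t) t)
    (hpde : ∀ x, ∀ k, -(lap (fun y => u y k) x) = u x k * j (1 - ‖u x‖ ^ 2)) (x : E2) :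
    pd 0 (gfun u J 0) x + pd 1 (gfun u J 1) x = - JJf u J x := by
  have hq : (1 : ℝ) - ‖u x‖^2 = 1 - QQ u x := by
    rw [normsq_eq]; simp [QQ, Fin.sum_univ_two]
  have comm : ∀ k : Fin 2, pd 1 (fun y => pd 0 (fun z => u z k) y) x
      = pd 0 (fun y => pd 1 (fun z => u z k) y) x := fun k =>
    pd_comm (comp_contDiff hu k) 1 0 x
  have hpde' : ∀ k : Fin 2,
      pd 0 (fun y => pd 0 (fun z => u z k) y) x + pd 1 (fun y => pd 1 (fun z => u z k) y) x
        = -(u x k * j (1 - QQ u x)) := by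
    intro k
    have := hpde x k
    rw [hq] at this
    rw [← this]
    simp [lap, Fin.sum_univ_two]
  rw [pd_gfun hu hj hJ 0 x, pd_gfun hu hj hJ 1 x]
  simp only [Fin.sum_univ_two, JJf, gradsq]
  norm_num
  rw [comm 0, comm 1]
  linear_combination
    (x 0 * pd 0 (fun y => u y 0) x + x 1 * pd 1 (fun y => u y 0) x) * hpde' 0
    + (x 0 * pd 0 (fun y => u y 1) x + x 1 * pd 1 (fun y => u y 1) x) * hpde' 1

end Div

section Polar

lemma cpt_eq (R θ : ℝ) : cpt R θ = (R * Real.cos θ) • bvec 0 + (R * Real.sin θ) • bvec 1 := by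
  ext l
  fin_cases l <;>
    simp [cpt, bvec, EuclideanSpace.single_apply, PiLp.add_apply, PiLp.smul_apply]

lemma cpt_apply_zero (R θ : ℝ) : cpt R θ 0 = R * Real.cos θ := by simp [cpt]
lemma cpt_apply_one (R θ : ℝ) : cpt R θ 1 = R * Real.sin θ := by simp [cpt]
lemma tv_apply_zero (θ : ℝ) : tv θ 0 = -Real.sin θ := by simp [tv]
lemma tv_apply_one (θ : ℝ) : tv θ 1 = Real.cos θ := by simp [tv]

lemma continuous_cpt : Continuous (fun p : ℝ × ℝ => cpt p.1 p.2) := by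
  have : (fun p : ℝ × ℝ => cpt p.1 p.2)
      = fun p : ℝ × ℝ => (p.1 * Real.cos p.2) • bvec 0 + (p.1 * Real.sin p.2) • bvec 1 := by
    funext p; exact cpt_eq p.1 p.2
  rw [this]
  exact ((continuous_fst.mul (Real.continuous_cos.comp continuous_snd)).smul
    continuous_const).add
    ((continuous_fst.mul (Real.continuous_sin.comp continuous_snd)).smul continuous_const)

lemma hasDerivAt_cpt_s (θ s : ℝ) : HasDerivAt (fun s => cpt s θ) (cpt 1 θ) s := by
  have h : HasDerivAt (fun s : ℝ => (s * Real.cos θ) • bvec 0 + (s * Real.sin θ) • bvec 1)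
      ((1 * Real.cos θ) • bvec 0 + (1 * Real.sin θ) • bvec 1) s := by
    exact (((hasDerivAt_id s).mul_const _).smul_const _).add
      (((hasDerivAt_id s).mul_const _).smul_const _)
  have e : (fun s => cpt s θ)
      = fun s : ℝ => (s * Real.cos θ) • bvec 0 + (s * Real.sin θ) • bvec 1 := by
    funext s; exact cpt_eq s θ
  rw [e, cpt_eq 1 θ]
  simpa using h

lemma hasDerivAt_cpt_theta (s θ : ℝ) : HasDerivAt (fun t => cpt s t) (s • tv θ) θ := by
  have h : HasDerivAt (fun t : ℝ => (s * Real.cos t) • bvec 0 + (s * Real.sin t) • bvec 1)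
      ((s * -Real.sin θ) • bvec 0 + (s * Real.cos θ) • bvec 1) θ := by
    exact (((Real.hasDerivAt_cos θ).const_mul s).smul_const _).add
      (((Real.hasDerivAt_sin θ).const_mul s).smul_const _)
  have e : (fun t => cpt s t)
      = fun t : ℝ => (s * Real.cos t) • bvec 0 + (s * Real.sin t) • bvec 1 := by
    funext t; exact cpt_eq s t
  rw [e]
  have e2 : s • tv θ = (s * -Real.sin θ) • bvec 0 + (s * Real.cos θ) • bvec 1 := by
    ext l
    fin_cases l <;>
      simp [tv, bvec, EuclideanSpace.single_apply, PiLp.add_apply, PiLp.smul_apply] <;> ring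
  rw [e2]; exact h

lemma hasDerivAt_comp_s {f : E2 → ℝ} (hf : ContDiff ℝ 1 f) (θ s : ℝ) :
    HasDerivAt (fun s => f (cpt s θ))
      (Real.cos θ * pd 0 f (cpt s θ) + Real.sin θ * pd 1 f (cpt s θ)) s := by
  have h := ((hf.differentiable one_ne_zero (cpt s θ)).hasFDerivAt).comp_hasDerivAt s
    (hasDerivAt_cpt_s θ s)
  have e : fderiv ℝ f (cpt s θ) (cpt 1 θ)
      = Real.cos θ * pd 0 f (cpt s θ) + Real.sin θ * pd 1 f (cpt s θ) := by
    rw [pd_apply_eq (hf.differentiable one_ne_zero (cpt s θ)), cpt_apply_zero, cpt_apply_one]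
    ring
  rw [← e]; exact h

lemma hasDerivAt_comp_theta {f : E2 → ℝ} (hf : ContDiff ℝ 1 f) (s θ : ℝ) :
    HasDerivAt (fun t => f (cpt s t))
      (s * (-Real.sin θ * pd 0 f (cpt s θ) + Real.cos θ * pd 1 f (cpt s θ))) θ := by
  have h := ((hf.differentiable one_ne_zero (cpt s θ)).hasFDerivAt).comp_hasDerivAt θ
    (hasDerivAt_cpt_theta s θ)
  have e : fderiv ℝ f (cpt s θ) (s • tv θ)
      = s * (-Real.sin θ * pd 0 f (cpt s θ) + Real.cos θ * pd 1 f (cpt s θ)) := by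
    rw [ContinuousLinearMap.map_smul, pd_apply_eq (hf.differentiable one_ne_zero (cpt s θ)), tv_apply_zero, tv_apply_one]
    simp
  rw [← e]; exact h

end Polar

def Pfun (u : E2 → E2) (J : ℝ → ℝ) (s θ : ℝ) : ℝ :=
  s * (gfun u J 0 (cpt s θ) * Real.cos θ + gfun u J 1 (cpt s θ) * Real.sin θ)

def Qfun (u : E2 → E2) (J : ℝ → ℝ) (s θ : ℝ) : ℝ :=
  -(gfun u J 0 (cpt s θ)) * Real.sin θ + gfun u J 1 (cpt s θ) * Real.cos θ

def DPf (u : E2 → E2) (J : ℝ → ℝ) (s θ : ℝ) : ℝ :=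
  (gfun u J 0 (cpt s θ) * Real.cos θ + gfun u J 1 (cpt s θ) * Real.sin θ)
  + s * (Real.cos θ * (Real.cos θ * pd 0 (gfun u J 0) (cpt s θ)
          + Real.sin θ * pd 1 (gfun u J 0) (cpt s θ))
       + Real.sin θ * (Real.cos θ * pd 0 (gfun u J 1) (cpt s θ)
          + Real.sin θ * pd 1 (gfun u J 1) (cpt s θ)))

def DQf (u : E2 → E2) (J : ℝ → ℝ) (s θ : ℝ) : ℝ :=
  (-(s * (-Real.sin θ * pd 0 (gfun u J 0) (cpt s θ)
      + Real.cos θ * pd 1 (gfun u J 0) (cpt s θ))) * Real.sin θ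
    - gfun u J 0 (cpt s θ) * Real.cos θ)
  + ((s * (-Real.sin θ * pd 0 (gfun u J 1) (cpt s θ)
      + Real.cos θ * pd 1 (gfun u J 1) (cpt s θ))) * Real.cos θ
    - gfun u J 1 (cpt s θ) * Real.sin θ)

section Deriv

variable {u : E2 → E2} {j J : ℝ → ℝ}

lemma hasDerivAt_Pfun (hu : ContDiff ℝ 2 u) (hj : Continuous j)
    (hJ : ∀ t, HasDerivAt J (j t) t) (θ s : ℝ) :
    HasDerivAt (fun s => Pfun u J s θ) (DPf u J s θ) s := by
  have h0 := hasDerivAt_comp_s (gfun_contDiff hu hj hJ 0) θ s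
  have h1 := hasDerivAt_comp_s (gfun_contDiff hu hj hJ 1) θ s
  have h := (hasDerivAt_id s).fun_mul ((h0.mul_const (Real.cos θ)).fun_add (h1.mul_const (Real.sin θ)))
  unfold Pfun DPf
  exact h.congr_deriv (by simp only [id]; ring)

lemma hasDerivAt_Qfun (hu : ContDiff ℝ 2 u) (hj : Continuous j)
    (hJ : ∀ t, HasDerivAt J (j t) t) (s θ : ℝ) :
    HasDerivAt (fun t => Qfun u J s t) (DQf u J s θ) θ := by
  have h0 := hasDerivAt_comp_theta (gfun_contDiff hu hj hJ 0) s θ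
  have h1 := hasDerivAt_comp_theta (gfun_contDiff hu hj hJ 1) s θ
  have h := (h0.fun_neg.fun_mul (Real.hasDerivAt_sin θ)).fun_add (h1.fun_mul (Real.hasDerivAt_cos θ))
  unfold Qfun DQf
  exact h.congr_deriv (by ring)

lemma DPf_add_DQf (hu : ContDiff ℝ 2 u) (hj : Continuous j)
    (hJ : ∀ t, HasDerivAt J (j t) t)
    (hpde : ∀ x, ∀ k, -(lap (fun y => u y k) x) = u x k * j (1 - ‖u x‖ ^ 2)) (s θ : ℝ) :
    DPf u J s θ + DQf u J s θ = -(s * JJf u J (cpt s θ)) := by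
  have h1 := div_gfun hu hj hJ hpde (cpt s θ)
  have h2 := Real.sin_sq_add_cos_sq θ
  unfold DPf DQf
  linear_combination (s * (Real.cos θ^2 + Real.sin θ^2)) * h1
    - (s * JJf u J (cpt s θ)) * h2

end Deriv

section FTC

variable {u : E2 → E2} {j J : ℝ → ℝ}

lemma swap_II {F : ℝ → ℝ → ℝ} (hF : Continuous (Function.uncurry F)) {a b c d : ℝ}
    (hab : a ≤ b) (hcd : c ≤ d) :
    ∫ x in a..b, (∫ y in c..d, F x y) = ∫ y in c..d, (∫ x in a..b, F x y) := by
  rw [intervalIntegral.integral_of_le hab]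
  simp_rw [intervalIntegral.integral_of_le hcd, intervalIntegral.integral_of_le hab]
  have hint : Integrable (Function.uncurry F)
      ((volume.restrict (Ioc a b)).prod (volume.restrict (Ioc c d))) := by
    rw [Measure.prod_restrict]
    apply (hF.continuousOn.integrableOn_compact (isCompact_Icc.prod isCompact_Icc)).mono_set
    exact Set.prod_mono Ioc_subset_Icc_self Ioc_subset_Icc_self
  exact MeasureTheory.integral_integral_swap hint

lemma cont_pd_cpt (hu : ContDiff ℝ 2 u) (hj : Continuous j)
    (hJ : ∀ t, HasDerivAt J (j t) t) (m i : Fin 2) :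
    Continuous (fun p : ℝ × ℝ => pd m (gfun u J i) (cpt p.1 p.2)) :=
  (pd_continuous (gfun_contDiff hu hj hJ i) m).comp continuous_cpt

lemma cont_g_cpt (hu : ContDiff ℝ 2 u) (hj : Continuous j)
    (hJ : ∀ t, HasDerivAt J (j t) t) (i : Fin 2) :
    Continuous (fun p : ℝ × ℝ => gfun u J i (cpt p.1 p.2)) :=
  ((gfun_contDiff hu hj hJ i).continuous).comp continuous_cpt

lemma cont_DPf (hu : ContDiff ℝ 2 u) (hj : Continuous j)
    (hJ : ∀ t, HasDerivAt J (j t) t) :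
    Continuous (Function.uncurry (DPf u J)) := by
  have c1 := cont_pd_cpt hu hj hJ
  have c2 := cont_g_cpt hu hj hJ
  have ccos : Continuous (fun p : ℝ × ℝ => Real.cos p.2) :=
    Real.continuous_cos.comp continuous_snd
  have csin : Continuous (fun p : ℝ × ℝ => Real.sin p.2) :=
    Real.continuous_sin.comp continuous_snd
  unfold Function.uncurry DPf
  exact (((c2 0).mul ccos).add ((c2 1).mul csin)).add
    (continuous_fst.mul ((ccos.mul ((ccos.mul (c1 0 0)).add (csin.mul (c1 1 0)))).add
      (csin.mul ((ccos.mul (c1 0 1)).add (csin.mul (c1 1 1))))))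

lemma cont_DQf (hu : ContDiff ℝ 2 u) (hj : Continuous j)
    (hJ : ∀ t, HasDerivAt J (j t) t) :
    Continuous (Function.uncurry (DQf u J)) := by
  have c1 := cont_pd_cpt hu hj hJ
  have c2 := cont_g_cpt hu hj hJ
  have ccos : Continuous (fun p : ℝ × ℝ => Real.cos p.2) :=
    Real.continuous_cos.comp continuous_snd
  have csin : Continuous (fun p : ℝ × ℝ => Real.sin p.2) :=
    Real.continuous_sin.comp continuous_snd
  unfold Function.uncurry DQf
  exact ((((continuous_fst.mul (((csin.neg).mul (c1 0 0)).add (ccos.mul (c1 1 0)))).neg).mul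
      csin).sub ((c2 0).mul ccos)).add
    (((continuous_fst.mul (((csin.neg).mul (c1 0 1)).add (ccos.mul (c1 1 1)))).mul ccos).sub
      ((c2 1).mul csin))

lemma cont_JJc (hu : ContDiff ℝ 2 u) (hj : Continuous j)
    (hJ : ∀ t, HasDerivAt J (j t) t) :
    Continuous (fun p : ℝ × ℝ => p.1 * JJf u J (cpt p.1 p.2)) :=
  continuous_fst.mul (((JJf_contDiff hu hj hJ).continuous).comp continuous_cpt)

lemma ftcP (hu : ContDiff ℝ 2 u) (hj : Continuous j)
    (hJ : ∀ t, HasDerivAt J (j t) t) (r θ : ℝ) :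
    ∫ s in (0:ℝ)..r, DPf u J s θ = Pfun u J r θ := by
  have h := intervalIntegral.integral_eq_sub_of_hasDerivAt
    (f := fun s => Pfun u J s θ) (f' := fun s => DPf u J s θ)
    (fun s _ => hasDerivAt_Pfun hu hj hJ θ s)
    (((cont_DPf hu hj hJ).comp (continuous_id.prodMk continuous_const)).intervalIntegrable 0 r)
  rw [h]
  show Pfun u J r θ - Pfun u J 0 θ = _
  have : Pfun u J 0 θ = 0 := by unfold Pfun; ring
  rw [this, sub_zero]

lemma ftcQ (hu : ContDiff ℝ 2 u) (hj : Continuous j)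
    (hJ : ∀ t, HasDerivAt J (j t) t) (s : ℝ) :
    ∫ θ in (0:ℝ)..(2*π), DQf u J s θ = 0 := by
  have h := intervalIntegral.integral_eq_sub_of_hasDerivAt
    (f := fun θ => Qfun u J s θ) (f' := fun θ => DQf u J s θ)
    (fun θ _ => hasDerivAt_Qfun hu hj hJ s θ)
    (((cont_DQf hu hj hJ).comp (continuous_const.prodMk continuous_id)).intervalIntegrable
      0 (2*π))
  rw [h]
  have e : cpt s (2*π) = cpt s 0 := by
    ext l; fin_cases l <;> simp [cpt]
  simp [Qfun, e, Real.sin_two_pi, Real.cos_two_pi]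

lemma key_identity (hu : ContDiff ℝ 2 u) (hj : Continuous j)
    (hJ : ∀ t, HasDerivAt J (j t) t)
    (hpde : ∀ x, ∀ k, -(lap (fun y => u y k) x) = u x k * j (1 - ‖u x‖ ^ 2))
    {r : ℝ} (hr : 0 ≤ r) :
    ∫ θ in (0:ℝ)..(2*π), Pfun u J r θ
      = - ∫ θ in (0:ℝ)..(2*π), ∫ s in (0:ℝ)..r, s * JJf u J (cpt s θ) := by
  have h2π : (0:ℝ) ≤ 2*π := by positivity
  have iDP : ∀ θ, IntervalIntegrable (fun s => DPf u J s θ) volume 0 r := fun θ =>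
    ((cont_DPf hu hj hJ).comp (continuous_id.prodMk continuous_const)).intervalIntegrable 0 r
  have iDQ : ∀ θ, IntervalIntegrable (fun s => DQf u J s θ) volume 0 r := fun θ =>
    ((cont_DQf hu hj hJ).comp (continuous_id.prodMk continuous_const)).intervalIntegrable 0 r
  have eq1 : ∀ θ, Pfun u J r θ
      = (∫ s in (0:ℝ)..r, (DPf u J s θ + DQf u J s θ)) - ∫ s in (0:ℝ)..r, DQf u J s θ := by
    intro θ
    rw [intervalIntegral.integral_add (iDP θ) (iDQ θ), ← ftcP hu hj hJ r θ]
    ring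
  have contsum : Continuous (Function.uncurry fun θ s => DPf u J s θ + DQf u J s θ) := by
    have : Continuous (fun q : ℝ × ℝ => (q.2, q.1)) := continuous_snd.prodMk continuous_fst
    exact ((cont_DPf hu hj hJ).comp this).add ((cont_DQf hu hj hJ).comp this)
  have contQ : Continuous (Function.uncurry fun θ s => DQf u J s θ) := by
    have : Continuous (fun q : ℝ × ℝ => (q.2, q.1)) := continuous_snd.prodMk continuous_fst
    exact (cont_DQf hu hj hJ).comp this
  calc ∫ θ in (0:ℝ)..(2*π), Pfun u J r θ
      = ∫ θ in (0:ℝ)..(2*π),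
          ((∫ s in (0:ℝ)..r, (DPf u J s θ + DQf u J s θ)) - ∫ s in (0:ℝ)..r, DQf u J s θ) := by
        exact intervalIntegral.integral_congr fun θ _ => eq1 θ
    _ = (∫ θ in (0:ℝ)..(2*π), ∫ s in (0:ℝ)..r, (DPf u J s θ + DQf u J s θ))
        - ∫ θ in (0:ℝ)..(2*π), ∫ s in (0:ℝ)..r, DQf u J s θ := by
        apply intervalIntegral.integral_sub
        · exact (intervalIntegral.continuous_parametric_intervalIntegral_of_continuous'
            contsum 0 r).intervalIntegrable 0 (2*π)
        · exact (intervalIntegral.continuous_parametric_intervalIntegral_of_continuous'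
            contQ 0 r).intervalIntegrable 0 (2*π)
    _ = - ∫ θ in (0:ℝ)..(2*π), ∫ s in (0:ℝ)..r, s * JJf u J (cpt s θ) := by
        have e1 : ∫ θ in (0:ℝ)..(2*π), ∫ s in (0:ℝ)..r, DQf u J s θ = 0 := by
          rw [swap_II contQ h2π hr]
          simp_rw [ftcQ hu hj hJ]
          simp
        rw [e1, sub_zero]
        have e2 : ∀ θ, (∫ s in (0:ℝ)..r, (DPf u J s θ + DQf u J s θ))
            = - ∫ s in (0:ℝ)..r, s * JJf u J (cpt s θ) := by
          intro θ
          rw [← intervalIntegral.integral_neg]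
          exact intervalIntegral.integral_congr fun s _ => DPf_add_DQf hu hj hJ hpde s θ
        rw [← intervalIntegral.integral_neg]
        exact intervalIntegral.integral_congr fun θ _ => e2 θ

end FTC

section Area

variable {u : E2 → E2} {j J : ℝ → ℝ}

def epsi : (ℝ × ℝ) ≃ᵐ E2 :=
  (MeasurableEquiv.finTwoArrow (α := ℝ)).symm.trans
    (MeasurableEquiv.toLp 2 (Fin 2 → ℝ))

lemma epsi_measurePreserving : MeasurePreserving epsi volume volume :=
  ((EuclideanSpace.volume_preserving_symm_measurableEquiv_toLp (Fin 2)).symm _).comp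
    ((volume_preserving_finTwoArrow ℝ).symm _)

lemma epsi_apply (p : ℝ × ℝ) : epsi p = WithLp.toLp 2 ![p.1, p.2] := by
  ext l
  fin_cases l <;> rfl

lemma area_polar (hu : ContDiff ℝ 2 u) (hj : Continuous j)
    (hJ : ∀ t, HasDerivAt J (j t) t) {r : ℝ} (hr : 0 < r) :
    ∫ x in Metric.ball (0:E2) r, JJf u J x
      = ∫ θ in (0:ℝ)..(2*π), ∫ s in (0:ℝ)..r, s * JJf u J (cpt s θ) := by
  have hπ := Real.pi_pos
  -- step A : transfer to ℝ × ℝ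
  have hA : ∫ x in Metric.ball (0:E2) r, JJf u J x
      = ∫ p in (epsi ⁻¹' Metric.ball (0:E2) r), JJf u J (epsi p) :=
    (epsi_measurePreserving.setIntegral_preimage_emb epsi.measurableEmbedding
      (JJf u J) (Metric.ball (0:E2) r)).symm
  -- step B : polar coordinates on ℝ × ℝ
  set T : Set (ℝ × ℝ) := epsi ⁻¹' Metric.ball (0:E2) r with hT
  have hTmeas : MeasurableSet T := epsi.measurable Metric.isOpen_ball.measurableSet
  have hB := integral_comp_polarCoord_symm (fun p : ℝ × ℝ =>
    T.indicator (fun q => JJf u J (epsi q)) p)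
  rw [← integral_indicator hTmeas] at hA
  rw [← hB] at hA
  -- identify the integrand on the polar side
  have hpt : polarCoord.target = Set.Ioi (0:ℝ) ×ˢ Set.Ioo (-π) π := rfl
  have hps : ∀ p : ℝ × ℝ, polarCoord.symm p = (p.1 * Real.cos p.2, p.1 * Real.sin p.2) :=
    fun p => rfl
  have hsymmT : ∀ p : ℝ × ℝ, p ∈ polarCoord.target →
      (polarCoord.symm p ∈ T ↔ p.1 < r) := by
    intro p hp
    have hp1 : 0 < p.1 := hp.1
    have : polarCoord.symm p = (p.1 * Real.cos p.2, p.1 * Real.sin p.2) :=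
      hps p
    rw [hT]
    simp only [Set.mem_preimage, this]
    rw [mem_ball_zero_iff]
    have hnorm : ‖epsi (p.1 * Real.cos p.2, p.1 * Real.sin p.2)‖^2 = p.1^2 := by
      rw [normsq_eq, epsi_apply]
      have : Real.sin p.2 ^ 2 + Real.cos p.2 ^ 2 = 1 := Real.sin_sq_add_cos_sq p.2
      simp only [Matrix.cons_val_zero, Matrix.cons_val_one, Matrix.head_cons]
      nlinarith [this]
    constructor
    · intro h
      have hn : ‖epsi (p.1 * Real.cos p.2, p.1 * Real.sin p.2)‖ < r := h
      nlinarith [norm_nonneg (epsi (p.1 * Real.cos p.2, p.1 * Real.sin p.2))]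
    · intro h
      have : ‖epsi (p.1 * Real.cos p.2, p.1 * Real.sin p.2)‖^2 < r^2 := by nlinarith
      have hn := norm_nonneg (epsi (p.1 * Real.cos p.2, p.1 * Real.sin p.2))
      nlinarith
  -- rewrite the polar-side integral as an integral over Ioo 0 r ×ˢ Ioo (-π) π
  have hset : ∫ p in polarCoord.target,
        p.1 • T.indicator (fun q => JJf u J (epsi q)) (polarCoord.symm p)
      = ∫ p in (Set.Ioo (0:ℝ) r ×ˢ Set.Ioo (-π) π),
          p.1 * JJf u J (cpt p.1 p.2) := by
    rw [setIntegral_congr_fun (polarCoord.open_target.measurableSet) (g := fun p =>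
      (Set.Ioo (0:ℝ) r ×ˢ Set.Ioo (-π) π).indicator
        (fun p => p.1 * JJf u J (cpt p.1 p.2)) p)]
    · rw [← integral_indicator (polarCoord.open_target.measurableSet)]
      rw [← integral_indicator ((isOpen_Ioo.prod isOpen_Ioo).measurableSet)]
      congr 1
      funext p
      rw [Set.indicator_indicator]
      congr 1
      rw [hpt]
      ext q
      simp only [Set.mem_inter_iff, Set.mem_prod, Set.mem_Ioi, Set.mem_Ioo]
      constructor
      · tauto
      · tauto
    · intro p hp
      have hiff := hsymmT p hp
      show p.1 • T.indicator (fun q => JJf u J (epsi q)) (polarCoord.symm p)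
        = (Set.Ioo (0:ℝ) r ×ˢ Set.Ioo (-π) π).indicator (fun p => p.1 * JJf u J (cpt p.1 p.2)) p
      by_cases h : p.1 < r
      · rw [Set.indicator_of_mem (hiff.mpr h), Set.indicator_of_mem]
        · have he : epsi (polarCoord.symm p) = cpt p.1 p.2 := by
            rw [hps, epsi_apply]; rfl
          rw [he]; simp
        · rw [hpt] at hp
          exact ⟨⟨hp.1, h⟩, hp.2⟩
      · rw [Set.indicator_of_notMem (fun hm => h (hiff.mp hm)), Set.indicator_of_notMem]
        · simp
        · intro hm
          exact h hm.1.2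
  rw [hA, hset]
  have hint : IntegrableOn (fun p : ℝ × ℝ => p.1 * JJf u J (cpt p.1 p.2))
      (Set.Ioo (0:ℝ) r ×ˢ Set.Ioo (-π) π) volume :=
    ((cont_JJc hu hj hJ).continuousOn.integrableOn_compact
      (isCompact_Icc.prod isCompact_Icc)).mono_set
      (Set.prod_mono Ioo_subset_Icc_self Ioo_subset_Icc_self)
  rw [MeasureTheory.Measure.volume_eq_prod]
  rw [setIntegral_prod _ (by rw [← MeasureTheory.Measure.volume_eq_prod]; exact hint)]
  have inner_eq : ∀ s : ℝ, ∫ θ in Set.Ioo (-π) π, s * JJf u J (cpt s θ)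
      = ∫ θ in (0:ℝ)..(2*π), s * JJf u J (cpt s θ) := by
    intro s
    rw [← MeasureTheory.integral_Ioc_eq_integral_Ioo,
      ← intervalIntegral.integral_of_le (by linarith : -π ≤ π)]
    have per : Function.Periodic (fun θ => s * JJf u J (cpt s θ)) (2*π) := by
      intro θ
      have e : cpt s (θ + 2*π) = cpt s θ := by
        ext l
        fin_cases l <;> simp [cpt, Real.cos_add_two_pi, Real.sin_add_two_pi]
      simp only [e]
    have hper := per.intervalIntegral_add_eq (-π) 0
    have e1 : -π + 2*π = π := by ring
    rw [e1, zero_add] at hper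
    exact hper
  rw [← MeasureTheory.integral_Ioc_eq_integral_Ioo,
    ← intervalIntegral.integral_of_le hr.le]
  rw [intervalIntegral.integral_congr (fun s _ => inner_eq s)]
  exact swap_II (F := fun s θ => s * JJf u J (cpt s θ)) (cont_JJc hu hj hJ) hr.le
    (by positivity)

end Area

section Boundary

variable {u : E2 → E2} {j J : ℝ → ℝ}

lemma boundary (hu : ContDiff ℝ 2 u) (r θ : ℝ) :
    Pfun u J r θ = r^2/2 * (‖fderiv ℝ u (cpt r θ) (cpt 1 θ)‖^2
      - ‖fderiv ℝ u (cpt r θ) (tv θ)‖^2 - JJf u J (cpt r θ)) := by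
  have hud : DifferentiableAt ℝ u (cpt r θ) :=
    (hu.differentiable (by norm_num)).differentiableAt
  unfold Pfun gfun
  rw [normsq_eq, normsq_eq]
  rw [fderiv_vec_apply hud (cpt 1 θ) 0, fderiv_vec_apply hud (cpt 1 θ) 1,
    fderiv_vec_apply hud (tv θ) 0, fderiv_vec_apply hud (tv θ) 1]
  simp only [gradsq, Fin.sum_univ_two, cpt_apply_zero, cpt_apply_one,
    tv_apply_zero, tv_apply_one]
  linear_combination (-(r^2/2) * JJf u J (cpt r θ)) * Real.sin_sq_add_cos_sq θ

end Boundary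

theorem stmt7 (u : E2 → E2) (hu : ContDiff ℝ 2 u) (j J : ℝ → ℝ) (hj : Continuous j)
    (hJ : ∀ t, HasDerivAt J (j t) t)
    (hpde : ∀ x, ∀ k, -(lap (fun y => u y k) x) = u x k * j (1 - ‖u x‖ ^ 2))
    (r : ℝ) (hr : 0 < r) :
    (∫ θ in (0:ℝ)..(2 * π), ‖(fderiv ℝ u (cpt r θ)) (cpt 1 θ)‖ ^ 2 * r)
      + (2 / r) * ∫ x in Metric.ball (0 : E2) r, J (1 - ‖u x‖ ^ 2)
    = (∫ θ in (0:ℝ)..(2 * π), ‖(fderiv ℝ u (cpt r θ)) (tv θ)‖ ^ 2 * r)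
      + ∫ θ in (0:ℝ)..(2 * π), J (1 - ‖u (cpt r θ)‖ ^ 2) * r := by
  have hπ : 0 < π := Real.pi_pos
  have hJJ : ∀ x, J (1 - ‖u x‖^2) = JJf u J x := by
    intro x
    unfold JJf
    congr 1
    rw [normsq_eq]
    simp [QQ, Fin.sum_univ_two]
  have key := key_identity hu hj hJ hpde hr.le
  have area := area_polar hu hj hJ (u := u) (J := J) hr
  have keyb : ∫ θ in (0:ℝ)..(2*π), (r^2/2 * (‖fderiv ℝ u (cpt r θ) (cpt 1 θ)‖^2
      - ‖fderiv ℝ u (cpt r θ) (tv θ)‖^2 - JJf u J (cpt r θ)))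
      = - ∫ x in Metric.ball (0:E2) r, JJf u J x := by
    rw [area, ← key]
    exact intervalIntegral.integral_congr fun θ _ => (boundary hu r θ).symm
  -- continuity facts
  have ccρ : Continuous fun θ : ℝ => cpt r θ :=
    continuous_cpt.comp (continuous_const.prodMk continuous_id)
  have cfd : Continuous fun θ : ℝ => fderiv ℝ u (cpt r θ) :=
    (hu.continuous_fderiv (by norm_num)).comp ccρ
  have cν : Continuous fun θ : ℝ => cpt 1 θ :=
    continuous_cpt.comp (continuous_const.prodMk continuous_id)
  have cτ : Continuous fun θ : ℝ => tv θ := by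
    have etv : (fun θ => tv θ)
        = fun θ : ℝ => (-Real.sin θ) • bvec 0 + (Real.cos θ) • bvec 1 := by
      funext θ
      ext l
      fin_cases l <;>
        simp [tv, bvec, EuclideanSpace.single_apply, PiLp.add_apply, PiLp.smul_apply]
    rw [etv]
    exact ((Real.continuous_sin.neg).smul continuous_const).add
      (Real.continuous_cos.smul continuous_const)
  have cNν : Continuous fun θ : ℝ => ‖fderiv ℝ u (cpt r θ) (cpt 1 θ)‖^2 :=
    ((cfd.clm_apply cν).norm.pow 2)
  have cNτ : Continuous fun θ : ℝ => ‖fderiv ℝ u (cpt r θ) (tv θ)‖^2 :=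
    ((cfd.clm_apply cτ).norm.pow 2)
  have cJc : Continuous fun θ : ℝ => JJf u J (cpt r θ) :=
    (JJf_contDiff hu hj hJ).continuous.comp ccρ
  rw [intervalIntegral.integral_const_mul,
    intervalIntegral.integral_sub ((cNν.fun_sub cNτ).intervalIntegrable 0 (2*π))
      (cJc.intervalIntegrable 0 (2*π)),
    intervalIntegral.integral_sub (cNν.intervalIntegrable 0 (2*π))
      (cNτ.intervalIntegrable 0 (2*π))] at keyb
  -- rewrite the goal's integrals
  have e1 : (∫ θ in (0:ℝ)..(2*π), ‖(fderiv ℝ u (cpt r θ)) (cpt 1 θ)‖^2 * r)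
      = (∫ θ in (0:ℝ)..(2*π), ‖(fderiv ℝ u (cpt r θ)) (cpt 1 θ)‖^2) * r :=
    intervalIntegral.integral_mul_const r _
  have e2 : (∫ θ in (0:ℝ)..(2*π), ‖(fderiv ℝ u (cpt r θ)) (tv θ)‖^2 * r)
      = (∫ θ in (0:ℝ)..(2*π), ‖(fderiv ℝ u (cpt r θ)) (tv θ)‖^2) * r :=
    intervalIntegral.integral_mul_const r _
  have e3 : (∫ θ in (0:ℝ)..(2*π), J (1 - ‖u (cpt r θ)‖^2) * r)
      = (∫ θ in (0:ℝ)..(2*π), JJf u J (cpt r θ)) * r := by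
    rw [intervalIntegral.integral_mul_const r _]
    congr 1
    exact intervalIntegral.integral_congr fun θ _ => hJJ (cpt r θ)
  have e4 : (∫ x in Metric.ball (0:E2) r, J (1 - ‖u x‖^2))
      = ∫ x in Metric.ball (0:E2) r, JJf u J x := by
    have : (fun x => J (1 - ‖u x‖^2)) = JJf u J := funext hJJ
    rw [this]
  rw [e1, e2, e3, e4]
  set A := ∫ θ in (0:ℝ)..(2*π), ‖(fderiv ℝ u (cpt r θ)) (cpt 1 θ)‖^2
  set B := ∫ θ in (0:ℝ)..(2*π), ‖(fderiv ℝ u (cpt r θ)) (tv θ)‖^2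
  set C := ∫ θ in (0:ℝ)..(2*π), JJf u J (cpt r θ)
  set I := ∫ x in Metric.ball (0:E2) r, JJf u J x
  have hI : I = -(r^2/2 * (A - B - C)) := by linarith
  rw [hI]
  field_simp
  ring
end
end

section
/- Let u : ℝ² → ℝ² be C² solving -Δu = u·j(1-|u|²) with |u| ≤ 1, ‖∇u‖_∞ = M < ∞, and j continuous with J' = j, J'(t)² ≤ C₀ J(t) on [0,1], and ∫_{ℝ²} J(1-|u|²) dx < ∞. Then there is C > 0 with ∫_{B_R} |∇u|² dx ≤ C·R for all R ≥ 1. -/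
open Real MeasureTheory Filter Set

noncomputable section

def prj (k : Fin 2) : E2 →L[ℝ] ℝ := EuclideanSpace.proj k

variable (u : E2 → E2)

lemma contDiff_uk (hu : ContDiff ℝ 2 u) (k : Fin 2) :
    ContDiff ℝ 2 (fun y => u y k) := (prj k).contDiff.comp hu

lemma contDiff_pd (hu : ContDiff ℝ 2 u) (i k : Fin 2) :
    ContDiff ℝ 1 (fun x => pd i (fun y => u y k) x) := by
  have h1 : ContDiff ℝ 1 (fderiv ℝ fun y => u y k) :=
    (contDiff_uk u hu k).fderiv_right (m := 1) (by norm_num)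
  exact (ContinuousLinearMap.apply ℝ ℝ (bvec i)).contDiff.comp h1

lemma pd_eq (hu : ContDiff ℝ 2 u) (k i : Fin 2) (x : E2) :
    pd i (fun y => u y k) x = fderiv ℝ u x (bvec i) k := by
  have h : (fun y => u y k) = (prj k) ∘ u := rfl
  rw [pd, h, fderiv_comp x (prj k).differentiableAt (hu.differentiable (by norm_num) x), (prj k).fderiv]
  simp [prj]

/-- the i-th component of the vector field `u ⋅ ∇u`. -/
def G (i : Fin 2) (x : E2) : ℝ := ∑ k, u x k * pd i (fun y => u y k) x

/-- its total derivative -/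
def DG (i : Fin 2) (x : E2) : E2 →L[ℝ] ℝ :=
  ∑ k, ((u x k • fderiv ℝ (fun y => pd i (fun z => u z k) y) x) +
        (pd i (fun y => u y k) x • fderiv ℝ (fun y => u y k) x))

lemma hasFDerivAt_G (hu : ContDiff ℝ 2 u) (i : Fin 2) (x : E2) :
    HasFDerivAt (G u i) (DG u i x) x := by
  apply HasFDerivAt.fun_sum
  intro k _
  have h1 : HasFDerivAt (fun y => u y k) (fderiv ℝ (fun y => u y k) x) x :=
    ((contDiff_uk u hu k).differentiable (by norm_num) x).hasFDerivAt
  have h2 : HasFDerivAt (fun y => pd i (fun z => u z k) y)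
      (fderiv ℝ (fun y => pd i (fun z => u z k) y) x) x :=
    ((contDiff_pd u hu i k).differentiable (by norm_num) x).hasFDerivAt
  simpa [mul_comm, Pi.mul_def] using h1.mul h2

lemma DG_apply (hu : ContDiff ℝ 2 u) (i : Fin 2) (x : E2) :
    DG u i x (bvec i) =
      ∑ k, (u x k * pd i (fun y => pd i (fun z => u z k) y) x
            + (pd i (fun y => u y k) x)^2) := by
  simp only [DG, ContinuousLinearMap.sum_apply, ContinuousLinearMap.add_apply,
    ContinuousLinearMap.smul_apply, smul_eq_mul]
  refine Finset.sum_congr rfl fun k _ => ?_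
  rw [pd, pd, sq]

lemma pd_G (hu : ContDiff ℝ 2 u) (i : Fin 2) (x : E2) :
    pd i (G u i) x = ∑ k, (u x k * pd i (fun y => pd i (fun z => u z k) y) x
            + (pd i (fun y => u y k) x)^2) := by
  rw [pd, (hasFDerivAt_G u hu i x).fderiv, DG_apply u hu i x]

lemma div_G (hu : ContDiff ℝ 2 u) (j : ℝ → ℝ)
    (hpde : ∀ x, ∀ k, -(lap (fun y => u y k) x) = u x k * j (1 - ‖u x‖ ^ 2)) (x : E2) :
    ∑ i, pd i (G u i) x = gradsq u x - ‖u x‖^2 * j (1 - ‖u x‖ ^ 2) := by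
  have hn : ‖u x‖^2 = ∑ k, (u x k)^2 := by
    rw [EuclideanSpace.norm_eq, Real.sq_sqrt (by positivity)]
    exact Finset.sum_congr rfl fun k _ => by simp
  set c := j (1 - ‖u x‖ ^ 2) with hc
  have key : ∀ k, u x k * lap (fun z => u z k) x = -(u x k^2 * c) := by
    intro k
    have h2 : lap (fun z => u z k) x = -(u x k * c) := by
      have h := hpde x k
      rw [hc]; linarith
    rw [h2]; ring
  calc ∑ i, pd i (G u i) x
      = ∑ i, ∑ k, (u x k * pd i (fun y => pd i (fun z => u z k) y) x
            + (pd i (fun y => u y k) x)^2) := Finset.sum_congr rfl fun i _ => pd_G u hu i x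
    _ = (∑ i, ∑ k, u x k * pd i (fun y => pd i (fun z => u z k) y) x) + gradsq u x := by
        rw [gradsq, ← Finset.sum_add_distrib]
        exact Finset.sum_congr rfl fun i _ => Finset.sum_add_distrib
    _ = (∑ k, u x k * lap (fun z => u z k) x) + gradsq u x := by
        rw [Finset.sum_comm]
        congr 1
        refine Finset.sum_congr rfl fun k _ => ?_
        rw [lap, Finset.mul_sum]
    _ = (∑ k, -(u x k^2 * c)) + gradsq u x := by
        congr 1
        exact Finset.sum_congr rfl fun k _ => key k
    _ = gradsq u x - ‖u x‖^2 * c := by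
        rw [Finset.sum_neg_distrib, ← Finset.sum_mul, ← hn]; ring

def psi : (Fin 2 → ℝ) ≃L[ℝ] E2 := (PiLp.continuousLinearEquiv 2 ℝ (fun _ : Fin 2 => ℝ)).symm

lemma psi_single (i : Fin 2) : psi (Pi.single i 1) = bvec i := rfl

lemma psi_eq_me : ⇑psi = ⇑(MeasurableEquiv.toLp 2 (Fin 2 → ℝ)) := rfl

lemma psi_mp : MeasurePreserving (⇑psi) volume volume := by
  rw [psi_eq_me]
  exact (EuclideanSpace.volume_preserving_symm_measurableEquiv_toLp (Fin 2)).symm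

lemma cont_G (hu : ContDiff ℝ 2 u) (i : Fin 2) : Continuous (G u i) := by
  apply continuous_finset_sum
  intro k _
  exact ((contDiff_uk u hu k).continuous).mul (contDiff_pd u hu i k).continuous

lemma cont_DG (hu : ContDiff ℝ 2 u) (i : Fin 2) : Continuous (DG u i) := by
  apply continuous_finset_sum
  intro k _
  exact (((contDiff_uk u hu k).continuous).smul
      ((contDiff_pd u hu i k).continuous_fderiv (by norm_num))).add
    ((contDiff_pd u hu i k).continuous.smul ((contDiff_uk u hu k).continuous_fderiv (by norm_num)))

lemma cont_div (hu : ContDiff ℝ 2 u) : Continuous (fun x => ∑ i, pd i (G u i) x) := by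
  have : (fun x => ∑ i, pd i (G u i) x) = fun x => ∑ i, DG u i x (bvec i) := by
    funext x
    exact Finset.sum_congr rfl fun i _ => by rw [pd, (hasFDerivAt_G u hu i x).fderiv]
  rw [this]
  exact continuous_finset_sum _ fun i _ =>
    (ContinuousLinearMap.apply ℝ ℝ (bvec i)).continuous.comp (cont_DG u hu i)

lemma G_bound (hu : ContDiff ℝ 2 u) (hub : ∀ x, ‖u x‖ ≤ 1) (M : ℝ)
    (hM : ∀ x, ‖fderiv ℝ u x‖ ≤ M) (i : Fin 2) (x : E2) : |G u i x| ≤ M := by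
  have hM0 : 0 ≤ M := le_trans (norm_nonneg _) (hM x)
  have : G u i x = inner (𝕜 := ℝ) (u x) (fderiv ℝ u x (bvec i)) := by
    rw [G, PiLp.inner_apply]
    refine Finset.sum_congr rfl fun k _ => ?_
    rw [pd_eq u hu k i x, RCLike.inner_apply, starRingEnd_apply, star_trivial, mul_comm]
  rw [this]
  calc |inner (𝕜 := ℝ) (u x) (fderiv ℝ u x (bvec i))|
      ≤ ‖u x‖ * ‖fderiv ℝ u x (bvec i)‖ := abs_real_inner_le_norm _ _
    _ ≤ 1 * (‖fderiv ℝ u x‖ * ‖bvec i‖) :=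
        mul_le_mul (hub x) ((fderiv ℝ u x).le_opNorm _) (norm_nonneg _) zero_le_one
    _ ≤ M := by
        have : ‖bvec i‖ = 1 := by simp [bvec]
        rw [this, one_mul, mul_one]; exact hM x

def QR (R : ℝ) : Set E2 := ⇑psi '' Icc (fun _ => -R) (fun _ => R)

lemma div_thm (hu : ContDiff ℝ 2 u) (R : ℝ) (hR : 0 < R) :
    ∫ x in QR R, ∑ i, pd i (G u i) x =
      ∑ i : Fin 2,
        ((∫ y in Icc ((fun _ : Fin 2 => -R) ∘ i.succAbove) ((fun _ : Fin 2 => R) ∘ i.succAbove),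
            G u i (psi (i.insertNth R y))) -
         ∫ y in Icc ((fun _ : Fin 2 => -R) ∘ i.succAbove) ((fun _ : Fin 2 => R) ∘ i.succAbove),
            G u i (psi (i.insertNth (-R) y))) := by
  have hemb : MeasurableEmbedding (⇑psi) := by
    rw [psi_eq_me]
    exact (MeasurableEquiv.toLp 2 (Fin 2 → ℝ)).measurableEmbedding
  rw [QR, psi_mp.setIntegral_image_emb hemb]
  have hle : (fun _ : Fin 2 => -R) ≤ (fun _ : Fin 2 => R) := fun i => by simp; linarith
  have key := MeasureTheory.integral_divergence_of_hasFDerivAt_off_countable'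
    (fun _ => -R) (fun _ => R) hle
    (fun i y => G u i (psi y))
    (fun i y => (DG u i (psi y)).comp (psi : (Fin 2 → ℝ) →L[ℝ] E2))
    ∅ countable_empty
    (fun i => ((cont_G u hu i).comp psi.continuous).continuousOn)
    (fun x _ i => (hasFDerivAt_G u hu i (psi x)).comp x psi.hasFDerivAt)
    ?_
  · rw [← key]
    refine setIntegral_congr_fun measurableSet_Icc fun y _ => ?_
    refine Finset.sum_congr rfl fun i _ => ?_
    rw [pd, (hasFDerivAt_G u hu i (psi y)).fderiv]
    rw [ContinuousLinearMap.comp_apply]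
    congr 1
  · have : (fun y => ∑ i, ((DG u i (psi y)).comp (psi : (Fin 2 → ℝ) →L[ℝ] E2)) (Pi.single i 1))
        = fun y => ∑ i, pd i (G u i) (psi y) := by
      funext y
      refine Finset.sum_congr rfl fun i _ => ?_
      rw [ContinuousLinearMap.comp_apply, pd, (hasFDerivAt_G u hu i (psi y)).fderiv]
      congr 1
    rw [this]
    exact ((cont_div u hu).comp psi.continuous).continuousOn.integrableOn_compact isCompact_Icc

lemma bdry_one (hu : ContDiff ℝ 2 u) (hub : ∀ x, ‖u x‖ ≤ 1) (M : ℝ)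
    (hM : ∀ x, ‖fderiv ℝ u x‖ ≤ M) (i : Fin 2) (t R : ℝ) (hR : 0 < R) :
    |∫ y in Icc ((fun _ : Fin 2 => -R) ∘ i.succAbove) ((fun _ : Fin 2 => R) ∘ i.succAbove),
        G u i (psi (i.insertNth t y))| ≤ M * (2 * R) := by
  have hvol : volume (Icc ((fun _ : Fin 2 => -R) ∘ i.succAbove)
      ((fun _ : Fin 2 => R) ∘ i.succAbove)) = ENNReal.ofReal (2 * R) := by
    rw [Real.volume_Icc_pi]
    simp only [Function.comp]
    rw [Finset.prod_const]
    norm_num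
    rw [show R + R = 2 * R by ring]; rw [ENNReal.ofReal_mul (by norm_num)]; simp
  have hb := norm_setIntegral_le_of_norm_le_const (μ := volume)
    (f := fun y => G u i (psi (i.insertNth t y)))
    (s := Icc ((fun _ : Fin 2 => -R) ∘ i.succAbove) ((fun _ : Fin 2 => R) ∘ i.succAbove))
    (C := M) (by rw [hvol]; exact ENNReal.ofReal_lt_top)
    (fun y _ => by
      rw [Real.norm_eq_abs]
      exact G_bound u hu hub M hM i _)
  rw [Real.norm_eq_abs] at hb
  refine hb.trans ?_
  rw [measureReal_def, hvol, ENNReal.toReal_ofReal (by positivity)]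

lemma cont_gradsq (hu : ContDiff ℝ 2 u) : Continuous (gradsq u) := by
  apply continuous_finset_sum
  intro i _
  apply continuous_finset_sum
  intro k _
  exact (contDiff_pd u hu i k).continuous.pow 2

lemma gradsq_nonneg (x : E2) : 0 ≤ gradsq u x :=
  Finset.sum_nonneg fun i _ => Finset.sum_nonneg fun k _ => sq_nonneg _

lemma abs_coord_le (x : E2) (k : Fin 2) : |x k| ≤ ‖x‖ := by
  rw [EuclideanSpace.norm_eq, ← Real.sqrt_sq_eq_abs (x k)]
  apply Real.sqrt_le_sqrt
  calc (x k)^2 = ‖x k‖^2 := by simp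
    _ ≤ ∑ i, ‖x i‖^2 := Finset.single_le_sum (f := fun i => ‖x i‖^2)
        (fun i _ => by positivity) (Finset.mem_univ k)

lemma ball_subset_QR (R : ℝ) : Metric.ball (0 : E2) R ⊆ QR R := by
  intro x hx
  rw [Metric.mem_ball, dist_zero_right] at hx
  refine ⟨psi.symm x, ?_, psi.apply_symm_apply x⟩
  rw [Set.mem_Icc]
  constructor <;> intro i <;>
    · have h1 : |(psi.symm x) i| ≤ ‖x‖ := abs_coord_le x i
      have h2 := abs_le.mp (h1.trans hx.le)
      first
      | exact h2.1
      | exact h2.2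

theorem stmt17 (u : E2 → E2) (hu : ContDiff ℝ 2 u) (j J : ℝ → ℝ) (hj : Continuous j)
    (hJ : ∀ t, HasDerivAt J (j t) t)
    (hpde : ∀ x, ∀ k, -(lap (fun y => u y k) x) = u x k * j (1 - ‖u x‖ ^ 2))
    (hub : ∀ x, ‖u x‖ ≤ 1)
    (M : ℝ) (hM : ∀ x, ‖fderiv ℝ u x‖ ≤ M)
    (C₀ : ℝ) (hC₀ : ∀ t ∈ Icc (0:ℝ) 1, (j t) ^ 2 ≤ C₀ * J t)
    (hint : Integrable (fun x => J (1 - ‖u x‖ ^ 2))) :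
    ∃ C > 0, ∀ R ≥ (1:ℝ), ∫ x in Metric.ball (0 : E2) R, gradsq u x ≤ C * R := by
  have hM0 : 0 ≤ M := le_trans (norm_nonneg _) (hM 0)
  set g : E2 → ℝ := fun x => C₀ * J (1 - ‖u x‖^2) with hgdef
  have hginteg : Integrable g := hint.const_mul C₀
  have htmem : ∀ x : E2, (1 - ‖u x‖^2) ∈ Icc (0:ℝ) 1 := by
    intro x
    constructor
    · nlinarith [hub x, norm_nonneg (u x)]
    · nlinarith [norm_nonneg (u x)]
  have hg0 : ∀ x, 0 ≤ g x := fun x =>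
    le_trans (sq_nonneg (j (1 - ‖u x‖^2))) (hC₀ _ (htmem x))
  set A := ∫ x, g x with hA
  have hA0 : 0 ≤ A := integral_nonneg hg0
  set sA := Real.sqrt A with hsA
  have hsA0 : 0 ≤ sA := Real.sqrt_nonneg A
  refine ⟨8*M + 3*sA + 3, by positivity, ?_⟩
  intro R hR
  have hR0 : 0 < R := lt_of_lt_of_le one_pos hR
  set lam := (sA + 1)/R with hlam
  have hlam0 : 0 < lam := by positivity
  have hQcomp : IsCompact (QR R) := (isCompact_Icc).image psi.continuous
  have hQmeas : MeasurableSet (QR R) := hQcomp.isClosed.measurableSet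
  have hQfin : volume (QR R) < ⊤ := hQcomp.measure_lt_top
  have hIgrad : IntegrableOn (gradsq u) (QR R) :=
    ((cont_gradsq u hu).continuousOn).integrableOn_compact hQcomp
  have hcontj : Continuous (fun x : E2 => ‖u x‖^2 * j (1 - ‖u x‖^2)) := by
    apply Continuous.mul
    · exact (hu.continuous.norm).pow 2
    · exact hj.comp (continuous_const.sub ((hu.continuous.norm).pow 2))
  have hIj : IntegrableOn (fun x => ‖u x‖^2 * j (1 - ‖u x‖^2)) (QR R) :=
    hcontj.continuousOn.integrableOn_compact hQcomp
  -- step 1 : ball to square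
  have step1 : ∫ x in Metric.ball (0:E2) R, gradsq u x ≤ ∫ x in QR R, gradsq u x :=
    setIntegral_mono_set hIgrad (Filter.Eventually.of_forall fun x => gradsq_nonneg u x)
      (HasSubset.Subset.eventuallyLE (ball_subset_QR R))
  -- step 2 : divergence split
  have step2 : ∫ x in QR R, gradsq u x =
      (∫ x in QR R, ∑ i, pd i (G u i) x) + ∫ x in QR R, ‖u x‖^2 * j (1 - ‖u x‖^2) := by
    have h1 : ∫ x in QR R, ∑ i, pd i (G u i) x
        = ∫ x in QR R, (gradsq u x - ‖u x‖^2 * j (1 - ‖u x‖^2)) := by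
      refine setIntegral_congr_fun hQmeas fun x _ => ?_
      exact div_G u hu j hpde x
    rw [h1, integral_sub hIgrad hIj]
    ring
  -- step 3 : boundary bound
  have step3 : ∫ x in QR R, ∑ i, pd i (G u i) x ≤ 8*M*R := by
    rw [div_thm u hu R hR0]
    calc ∑ i : Fin 2,
        ((∫ y in Icc ((fun _ : Fin 2 => -R) ∘ i.succAbove) ((fun _ : Fin 2 => R) ∘ i.succAbove),
            G u i (psi (i.insertNth R y))) -
         ∫ y in Icc ((fun _ : Fin 2 => -R) ∘ i.succAbove) ((fun _ : Fin 2 => R) ∘ i.succAbove),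
            G u i (psi (i.insertNth (-R) y)))
        ≤ ∑ _i : Fin 2, (M*(2*R) + M*(2*R)) := by
          refine Finset.sum_le_sum fun i _ => ?_
          have h1 := abs_le.mp (bdry_one u hu hub M hM i R R hR0)
          have h2 := abs_le.mp (bdry_one u hu hub M hM i (-R) R hR0)
          linarith [h1.1, h1.2, h2.1, h2.2]
      _ = 8*M*R := by simp [Finset.sum_const]; ring
  -- step 4 : potential term bound
  have hQvol : (volume (QR R)).toReal = 2*R * (2*R) := by
    have himg : QR R = ⇑(MeasurableEquiv.toLp 2 (Fin 2 → ℝ)).symm ⁻¹'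
        (Icc (fun _ : Fin 2 => -R) (fun _ : Fin 2 => R)) := by
      rw [QR]
      rw [show ⇑psi = ⇑(MeasurableEquiv.toLp 2 (Fin 2 → ℝ)) from rfl]
      exact congrFun (Set.image_eq_preimage_of_inverse
        (MeasurableEquiv.toLp 2 (Fin 2 → ℝ)).symm_apply_apply
        (MeasurableEquiv.toLp 2 (Fin 2 → ℝ)).apply_symm_apply) _
    rw [himg, (EuclideanSpace.volume_preserving_symm_measurableEquiv_toLp (Fin 2)).measure_preimage
      measurableSet_Icc.nullMeasurableSet]
    rw [Real.volume_Icc_pi]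
    rw [Fin.prod_univ_two]
    norm_num
    rw [ENNReal.toReal_ofReal (by linarith)]
    ring
  -- pointwise bound for the potential term
  have hpt : ∀ x ∈ QR R, ‖u x‖^2 * j (1 - ‖u x‖^2) ≤ g x/(2*lam) + lam/2 := by
    intro x _
    have hn1 : ‖u x‖^2 ≤ 1 := by nlinarith [hub x, norm_nonneg (u x)]
    have e1 : ‖u x‖^2 * j (1 - ‖u x‖^2) ≤ |j (1 - ‖u x‖^2)| := by
      calc ‖u x‖^2 * j (1 - ‖u x‖^2) ≤ ‖u x‖^2 * |j (1 - ‖u x‖^2)| :=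
            mul_le_mul_of_nonneg_left (le_abs_self _) (by positivity)
        _ ≤ 1 * |j (1 - ‖u x‖^2)| := mul_le_mul_of_nonneg_right hn1 (abs_nonneg _)
        _ = |j (1 - ‖u x‖^2)| := one_mul _
    have e2 : |j (1 - ‖u x‖^2)| ≤ Real.sqrt (g x) := by
      rw [← Real.sqrt_sq_eq_abs]
      exact Real.sqrt_le_sqrt (hC₀ _ (htmem x))
    have e3 : Real.sqrt (g x) ≤ g x/(2*lam) + lam/2 := by
      have h4 : 2*lam*Real.sqrt (g x) ≤ g x + lam^2 := by
        nlinarith [Real.sq_sqrt (hg0 x), sq_nonneg (Real.sqrt (g x) - lam)]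
      calc Real.sqrt (g x) = (2*lam*Real.sqrt (g x))/(2*lam) := by field_simp
        _ ≤ (g x + lam^2)/(2*lam) := by gcongr
        _ = g x/(2*lam) + lam/2 := by field_simp
    linarith
  -- step 4
  have hIrhs : IntegrableOn (fun x => g x/(2*lam) + lam/2) (QR R) := by
    apply Integrable.add
    · exact (hginteg.restrict.div_const (2*lam))
    · exact (integrableOn_const hQfin.ne)
  have step4 : ∫ x in QR R, ‖u x‖^2 * j (1 - ‖u x‖^2) ≤ A/(2*lam) + lam/2*(2*R*(2*R)) := by
    calc ∫ x in QR R, ‖u x‖^2 * j (1 - ‖u x‖^2)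
        ≤ ∫ x in QR R, (g x/(2*lam) + lam/2) := setIntegral_mono_on hIj hIrhs hQmeas hpt
      _ = (∫ x in QR R, g x)/(2*lam) + (volume (QR R)).toReal * (lam/2) := by
          rw [integral_add (hginteg.restrict.div_const (2*lam))
            (integrableOn_const hQfin.ne)]
          rw [integral_div, setIntegral_const, smul_eq_mul, measureReal_def]
      _ ≤ A/(2*lam) + lam/2*(2*R*(2*R)) := by
          have h5 : ∫ x in QR R, g x ≤ A :=
            setIntegral_le_integral hginteg (Filter.Eventually.of_forall hg0)
          have h6 : (∫ x in QR R, g x)/(2*lam) ≤ A/(2*lam) := by gcongr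
          rw [hQvol]
          linarith
  -- final arithmetic
  have hA_eq : A = sA * sA := (Real.mul_self_sqrt hA0).symm
  have h1 : A/(2*lam) = A*R/(2*(sA+1)) := by rw [hlam]; field_simp; try ring
  have h2 : lam/2*(2*R*(2*R)) = 2*(sA+1)*R := by rw [hlam]; field_simp; try ring
  have h3 : A*R/(2*(sA+1)) ≤ sA*R/2 := by
    rw [div_le_div_iff₀ (by positivity) (by positivity)]
    nlinarith [hA_eq, hsA0, hR0]
  calc ∫ x in Metric.ball (0:E2) R, gradsq u x ≤ ∫ x in QR R, gradsq u x := step1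
    _ = (∫ x in QR R, ∑ i, pd i (G u i) x) + ∫ x in QR R, ‖u x‖^2 * j (1 - ‖u x‖^2) := step2
    _ ≤ 8*M*R + (A/(2*lam) + lam/2*(2*R*(2*R))) := by linarith
    _ ≤ (8*M + 3*sA + 3)*R := by
        rw [h1, h2] at *
        nlinarith [h3, hsA0, hR0, hM0]
end
end
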